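/- For any n-dimensional non-model filiform Lie algebra g, the invariants satisfy 4 ≤ z_1 ≤ z_2 < n ≤ 2 z_2 − 2, where z_1 = min{k ≥ 4 : [e_k, e_n] ≠ 0} and z_2 = min{k ≥ 4 : [e_k, e_{k+1}] ≠ 0} for an adapted basis {e_1,…,e_n}. -/

import Mathlib

/-- A complex Lie algebra `L` of dimension `n` is filiform if its lower central series
`C^1 g = g`, `C^k g = ⁅C^{k-1} g, g⁆` (here `C^k g = LieModule.lowerCentralSeries ℂ L L (k-1)`)
satisfies `dim C^k g = n - k` for all `2 ≤ k ≤ n`. -/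
def IsFiliform (L : Type*) [LieRing L] [LieAlgebra ℂ L] (n : ℕ) : Prop :=
  Module.finrank ℂ L = n ∧
    ∀ k : ℕ, 2 ≤ k → k ≤ n →
      Module.finrank ℂ (LieModule.lowerCentralSeries ℂ L L (k - 1)) = n - k

/-- An adapted basis `e_1, …, e_n` of an `n`-dimensional filiform Lie algebra:
`⁅e_1, e_h⁆ = e_{h-1}` for `3 ≤ h ≤ n`, `⁅e_2, e_h⁆ = 0` for `1 ≤ h ≤ n`, and
`⁅e_3, e_h⁆ = 0` for `2 ≤ h ≤ n`.  The family `e` is indexed by `ℕ`, with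
`e 1, …, e n` the members of the basis `b`. -/
structure AdaptedBasis (n : ℕ) (L : Type*) [LieRing L] [LieAlgebra ℂ L] where
  b : Module.Basis (Fin n) ℂ L
  e : ℕ → L
  he : ∀ i : Fin n, e (i.1 + 1) = b i
  adapted1 : ∀ h, 3 ≤ h → h ≤ n → ⁅e 1, e h⁆ = e (h - 1)
  adapted2 : ∀ h, 1 ≤ h → h ≤ n → ⁅e 2, e h⁆ = 0
  adapted3 : ∀ h, 2 ≤ h → h ≤ n → ⁅e 3, e h⁆ = 0

namespace AuxFiliform

variable {n : ℕ} {L : Type*} [LieRing L] [LieAlgebra ℂ L]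

noncomputable def f (B : AdaptedBasis n L) : Module.End ℂ L := LieAlgebra.ad ℂ L (B.e 1)

lemma f_apply (B : AdaptedBasis n L) (x : L) : f B x = ⁅B.e 1, x⁆ := by simp [f, LieAlgebra.ad_apply]

def g (B : AdaptedBasis n L) (i j : ℕ) : L :=
  if 2 ≤ i ∧ i ≤ n ∧ 2 ≤ j ∧ j ≤ n then ⁅B.e i, B.e j⁆ else 0

lemma g_eq (B : AdaptedBasis n L) {i j : ℕ} (h2i : 2 ≤ i) (hin : i ≤ n) (h2j : 2 ≤ j)
    (hjn : j ≤ n) : g B i j = ⁅B.e i, B.e j⁆ := if_pos ⟨h2i, hin, h2j, hjn⟩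

lemma g_zero (B : AdaptedBasis n L) {i j : ℕ} (h : ¬(2 ≤ i ∧ i ≤ n ∧ 2 ≤ j ∧ j ≤ n)) :
    g B i j = 0 := if_neg h

lemma e1e2 (B : AdaptedBasis n L) (hn : 1 ≤ n) : ⁅B.e 1, B.e 2⁆ = 0 := by
  rw [← lie_skew, B.adapted2 1 le_rfl hn, neg_zero]

lemma step (B : AdaptedBasis n L) (i j : ℕ) (hi : i ≤ n) (hj3 : 3 ≤ j) (hjn : j ≤ n) :
    f B (g B i j) = g B (i - 1) j + g B i (j - 1) := by
  rcases lt_or_ge i 2 with h2 | h2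
  · rw [g_zero B (by omega), g_zero B (by omega), g_zero B (by omega), map_zero, add_zero]
  rcases eq_or_lt_of_le h2 with h2' | h3
  · -- i = 2
    rw [g_eq B h2 hi (by omega) hjn, g_zero B (by omega), g_eq B h2 hi (by omega) (by omega),
      ← h2', B.adapted2 j (by omega) hjn, B.adapted2 (j-1) (by omega) (by omega), map_zero,
      add_zero]
  · -- 3 ≤ i
    rw [g_eq B h2 hi (by omega) hjn, g_eq B (by omega) (by omega) (by omega) hjn,
      g_eq B h2 hi (by omega) (by omega), f_apply, leibniz_lie,
      B.adapted1 i h3 hi, B.adapted1 j hj3 hjn]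


lemma pow_e (B : AdaptedBasis n L) (t : ℕ) : ∀ l, 2 ≤ l - t → l ≤ n →
    (f B ^ t) (B.e l) = B.e (l - t) := by
  induction t with
  | zero => intro l _ _; simp
  | succ t ih =>
    intro l h2 hln
    have h3 : 3 ≤ l - t := by omega
    rw [pow_succ', Module.End.mul_apply, ih l (by omega) hln, f_apply,
      B.adapted1 (l - t) h3 (by omega)]
    exact congrArg B.e (by omega)

lemma pow_e_zero (B : AdaptedBasis n L) {l m : ℕ} (h2 : 2 ≤ l) (hln : l ≤ n)
    (hm : l - 1 ≤ m) : (f B ^ m) (B.e l) = 0 := by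
  have hdec : m = (m - (l - 1)) + (1 + (l - 2)) := by omega
  rw [hdec, pow_add, pow_add, Module.End.mul_apply, Module.End.mul_apply,
    pow_e B (l - 2) l (by omega) hln]
  have : l - (l - 2) = 2 := by omega
  rw [this, pow_one, f_apply, e1e2 B (by omega), map_zero]


lemma pascal (B : AdaptedBasis n L) (i j : ℕ) (hi : i ≤ n) (hjn : j ≤ n) :
    ∀ m, m + 2 ≤ j → (f B ^ m) (g B i j) - g B i (j - m) ∈
      Submodule.span ℂ ((fun a => g B (i - a) (j - m + a)) '' Set.Icc 1 m) := by
  intro m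
  induction m with
  | zero => intro _; simp
  | succ m ih =>
    intro hj
    have hw := ih (by omega)
    set S' : Submodule ℂ L :=
      Submodule.span ℂ ((fun a => g B (i - a) (j - (m+1) + a)) '' Set.Icc 1 (m+1)) with hS'
    have hgen : ∀ a, 1 ≤ a → a ≤ m → f B (g B (i - a) (j - m + a)) ∈ S' := by
      intro a ha1 ha2
      rw [step B (i - a) (j - m + a) (by omega) (by omega) (by omega)]
      have e1 : g B (i - a - 1) (j - m + a) = g B (i - (a+1)) (j - (m+1) + (a+1)) := by
        congr 1 <;> omega
      have e2 : g B (i - a) (j - m + a - 1) = g B (i - a) (j - (m+1) + a) := by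
        congr 1; omega
      rw [e1, e2]
      exact add_mem (Submodule.subset_span ⟨a+1, ⟨by omega, by omega⟩, rfl⟩)
        (Submodule.subset_span ⟨a, ⟨by omega, by omega⟩, rfl⟩)
    have hmap : ∀ x ∈ Submodule.span ℂ ((fun a => g B (i - a) (j - m + a)) '' Set.Icc 1 m),
        f B x ∈ S' := by
      intro x hx
      induction hx using Submodule.span_induction with
      | mem y hy => obtain ⟨a, ⟨ha1, ha2⟩, rfl⟩ := hy; exact hgen a ha1 ha2
      | zero => simp
      | add u v _ _ hu hv => rw [map_add]; exact add_mem hu hv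
      | smul c u _ hu => rw [map_smul]; exact Submodule.smul_mem _ _ hu
    have hstep := step B i (j - m) hi (by omega) (by omega)
    have expand : (f B) ((f B ^ m) (g B i j)) =
        f B ((f B ^ m) (g B i j) - g B i (j - m)) + g B (i - 1) (j - m)
          + g B i (j - m - 1) := by
      rw [map_sub, hstep]; abel
    have e3 : g B i (j - m - 1) = g B i (j - (m+1)) := by congr 1
    have e4 : g B (i - 1) (j - m) = (fun a => g B (i - a) (j - (m+1) + a)) 1 := by
      simp only []
      congr 1
      omega
    rw [pow_succ', Module.End.mul_apply, expand, e3, add_sub_cancel_right, e4]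
    exact add_mem (hmap _ hw) (Submodule.subset_span ⟨1, ⟨le_rfl, by omega⟩, rfl⟩)


lemma mem_lcs (B : AdaptedBasis n L) :
    ∀ m, ∀ l, 2 ≤ l → l ≤ n - m → B.e l ∈ LieModule.lowerCentralSeries ℂ L L m := by
  intro m
  induction m with
  | zero => intro l _ _; simp
  | succ m ih =>
    intro l hl2 hln
    have h1 : l + 1 ≤ n - m := by omega
    have h2 : ⁅B.e 1, B.e (l+1)⁆ = B.e l := B.adapted1 (l+1) (by omega) (by omega)
    rw [← h2, LieModule.lowerCentralSeries_succ]
    exact LieSubmodule.lie_mem_lie (LieSubmodule.mem_top _) (ih (l+1) (by omega) h1)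

lemma span_finrank (B : AdaptedBasis n L) (r : ℕ) (hr : r ≤ n - 1) (hn : 1 ≤ n) :
    Module.finrank ℂ (Submodule.span ℂ (B.e '' Set.Icc 2 r)) = r - 1 := by
  have hu : ∀ t : Fin (r - 1), t.1 + 1 < n := fun t => by omega
  set u : Fin (r - 1) → Fin n := fun t => ⟨t.1 + 1, hu t⟩ with hudef
  have hrange : Set.range (B.b ∘ u) = B.e '' Set.Icc 2 r := by
    ext x
    constructor
    · rintro ⟨t, rfl⟩
      exact ⟨t.1 + 2, ⟨by omega, by omega⟩, B.he (u t)⟩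
    · rintro ⟨l, ⟨hl2, hlr⟩, rfl⟩
      refine ⟨⟨l - 2, by omega⟩, ?_⟩
      rw [Function.comp_apply, ← B.he]
      exact congrArg B.e (by simp [hudef]; omega)
  have hinj : Function.Injective u := by
    intro a b hab
    have : a.1 + 1 = b.1 + 1 := congrArg Fin.val hab
    exact Fin.ext (by omega)
  have hli : LinearIndependent ℂ (B.b ∘ u) := B.b.linearIndependent.comp u hinj
  rw [← hrange, finrank_span_eq_card hli, Fintype.card_fin]

lemma lcs_eq (B : AdaptedBasis n L) (hfil : IsFiliform L n) (hn : 5 ≤ n) (r : ℕ)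
    (hr1 : 1 ≤ r) (hrn : r ≤ n - 1) :
    (LieModule.lowerCentralSeries ℂ L L (n - r) : Submodule ℂ L) =
      Submodule.span ℂ (B.e '' Set.Icc 2 r) := by
  haveI : FiniteDimensional ℂ L := FiniteDimensional.of_finrank_pos (by rw [hfil.1]; omega)
  have hle : Submodule.span ℂ (B.e '' Set.Icc 2 r) ≤
      (LieModule.lowerCentralSeries ℂ L L (n - r) : Submodule ℂ L) := by
    rw [Submodule.span_le]
    rintro x ⟨l, ⟨hl2, hlr⟩, rfl⟩
    simp only [SetLike.mem_coe, LieSubmodule.mem_toSubmodule]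
    exact mem_lcs B (n - r) l hl2 (by omega)
  have h2 := hfil.2 (n - r + 1) (by omega) (by omega)
  have h4 : n - r + 1 - 1 = n - r := by omega
  have h5 : n - (n - r + 1) = r - 1 := by omega
  rw [h4, h5] at h2
  have h1 : Module.finrank ℂ
      ((LieModule.lowerCentralSeries ℂ L L (n - r) : Submodule ℂ L)) = r - 1 := h2
  exact (Submodule.eq_of_le_of_finrank_le hle
    (by rw [h1, span_finrank B r hrn (by omega)])).symm

lemma bracket_mem (B : AdaptedBasis n L) (hfil : IsFiliform L n) (hn : 5 ≤ n) (p : ℕ)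
    (hp2 : 2 ≤ p) (hpn : p ≤ n) :
    ⁅B.e p, B.e n⁆ ∈ Submodule.span ℂ (B.e '' Set.Icc 2 (p - 1)) := by
  rw [← lcs_eq B hfil hn (p-1) (by omega) (by omega)]
  have h1 : B.e p ∈ LieModule.lowerCentralSeries ℂ L L (n - p) :=
    mem_lcs B (n - p) p hp2 (by omega)
  have h2 : ⁅B.e n, B.e p⁆ ∈ LieModule.lowerCentralSeries ℂ L L (n - p + 1) := by
    rw [LieModule.lowerCentralSeries_succ]
    exact LieSubmodule.lie_mem_lie (LieSubmodule.mem_top _) h1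
  have h3 : n - (p - 1) = n - p + 1 := by omega
  rw [h3]
  have h4 : ⁅B.e p, B.e n⁆ = -⁅B.e n, B.e p⁆ := by rw [lie_skew]
  rw [h4]
  exact neg_mem ((LieSubmodule.mem_toSubmodule _).mpr h2)


lemma kill_span (B : AdaptedBasis n L) (r m : ℕ) (hrn : r ≤ n) (hm : r - 1 ≤ m) :
    ∀ x ∈ Submodule.span ℂ (B.e '' Set.Icc 2 r), (f B ^ m) x = 0 := by
  intro x hx
  induction hx using Submodule.span_induction with
  | mem y hy =>
    obtain ⟨l, ⟨hl2, hlr⟩, rfl⟩ := hy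
    exact pow_e_zero B hl2 (by omega) (by omega)
  | zero => simp
  | add u v _ _ hu hv => rw [map_add, hu, hv, add_zero]
  | smul c u _ hu => rw [map_smul, hu, smul_zero]

lemma van (B : AdaptedBasis n L) (hfil : IsFiliform L n) (hn : 5 ≤ n) :
    ∀ p j, p + j ≤ n + 2 → g B p j = 0 := by
  intro p
  induction p using Nat.strong_induction_on with
  | _ p ih =>
    intro j hpj
    by_cases hc : 2 ≤ p ∧ p ≤ n ∧ 2 ≤ j ∧ j ≤ n
    swap
    · exact g_zero B hc
    obtain ⟨hp2, hpn, hj2, hjn⟩ := hc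
    rcases eq_or_lt_of_le hp2 with h2 | h3
    · rw [g_eq B hp2 hpn hj2 hjn, ← h2]; exact B.adapted2 j (by omega) hjn
    rcases eq_or_lt_of_le (Nat.succ_le_of_lt h3) with h3' | h4
    · rw [g_eq B hp2 hpn hj2 hjn, ← h3']; exact B.adapted3 j hj2 hjn
    have hkill : (f B ^ (n - j)) ⁅B.e p, B.e n⁆ = 0 :=
      kill_span B (p - 1) (n - j) (by omega) (by omega) _ (bracket_mem B hfil hn p hp2 hpn)
    have hpas := pascal B p n hpn le_rfl (n - j) (by omega)
    have hnnj : n - (n - j) = j := by omega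
    simp only [hnnj] at hpas
    rw [g_eq B hp2 hpn (by omega) le_rfl, hkill, zero_sub] at hpas
    have hS : Submodule.span ℂ ((fun a => g B (p - a) (j + a)) '' Set.Icc 1 (n - j)) ≤ ⊥ := by
      rw [Submodule.span_le]
      rintro x ⟨a, ⟨ha1, ha2⟩, rfl⟩
      simp only [SetLike.mem_coe, Submodule.mem_bot]
      by_cases hpa : 2 ≤ p - a
      · exact ih (p - a) (by omega) (j + a) (by omega)
      · exact g_zero B (by omega)
    have hbot := hS hpas
    rw [Submodule.mem_bot, neg_eq_zero] at hbot
    exact hbot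

lemma dj (B : AdaptedBasis n L) (K : ℕ)
    (hK : ∀ i, 2 ≤ i → i ≤ K → i ≤ n → ⁅B.e i, B.e n⁆ = 0) :
    ∀ d, ∀ i, 2 ≤ i → i ≤ K → i ≤ n → 2 ≤ n - d → ⁅B.e i, B.e (n - d)⁆ = 0 := by
  intro d
  induction d with
  | zero => intro i h2 hiK hin _; exact hK i h2 hiK hin
  | succ d ih =>
    intro i h2 hiK hin hnd
    rcases eq_or_lt_of_le h2 with h2' | h3
    · rw [← h2']; exact B.adapted2 (n - (d+1)) (by omega) (by omega)
    · have hz : ⁅B.e i, B.e (n - d)⁆ = 0 := ih i (by omega) hiK hin (by omega)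
      have hlz : ⁅B.e 1, ⁅B.e i, B.e (n - d)⁆⁆ = 0 := by rw [hz, lie_zero]
      rw [leibniz_lie, B.adapted1 i h3 hin, B.adapted1 (n - d) (by omega) (by omega),
        ih (i - 1) (by omega) (by omega) (by omega) (by omega), zero_add] at hlz
      rw [show n - (d+1) = n - d - 1 from (Nat.sub_sub n d 1).symm]
      exact hlz

lemma diff (B : AdaptedBasis n L)
    (hdiag : ∀ k, 2 ≤ k → k + 1 ≤ n → ⁅B.e k, B.e (k+1)⁆ = 0) :
    ∀ d, ∀ i, 2 ≤ i → i + d ≤ n → ⁅B.e i, B.e (i + d)⁆ = 0 := by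
  intro d
  induction d using Nat.strong_induction_on with
  | _ d ih =>
    intro i h2 hin
    rcases d with _ | d
    · simp
    rcases d with _ | d
    · exact hdiag i h2 hin
    have hz : ⁅B.e (i+1), B.e (i + (d+2))⁆ = 0 := by
      have h := ih (d+1) (by omega) (i+1) (by omega) (by omega)
      rw [show i + 1 + (d+1) = i + (d+2) by omega] at h
      exact h
    have hlz : ⁅B.e 1, ⁅B.e (i+1), B.e (i + (d+2))⁆⁆ = 0 := by rw [hz, lie_zero]
    rw [leibniz_lie, B.adapted1 (i+1) (by omega) (by omega),
      B.adapted1 (i + (d+2)) (by omega) (by omega)] at hlz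
    have h1 : B.e (i + 1 - 1) = B.e i := congrArg B.e (by omega)
    have h2' : B.e (i + (d+2) - 1) = B.e (i + 1 + d) := congrArg B.e (by omega)
    rw [h1, h2'] at hlz
    have h3 : ⁅B.e (i+1), B.e (i + 1 + d)⁆ = 0 := ih d (by omega) (i+1) (by omega) (by omega)
    rw [h3, add_zero] at hlz
    exact hlz

end AuxFiliform

open AuxFiliform

/-- For any `n`-dimensional non-model filiform Lie algebra with adapted basis
`e_1, …, e_n`, the invariants `z_1 = min {k ≥ 4 : ⁅e_k, e_n⁆ ≠ 0}` and
`z_2 = min {k ≥ 4 : ⁅e_k, e_{k+1}⁆ ≠ 0}` satisfy `4 ≤ z_1 ≤ z_2 < n ≤ 2 z_2 - 2`. -/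
theorem invariants_inequalities
    (n : ℕ) (L : Type*) [LieRing L] [LieAlgebra ℂ L]
    (hfil : IsFiliform L n) (B : AdaptedBasis n L)
    (hnonmodel : ∃ i j, 2 ≤ i ∧ i < j ∧ j ≤ n ∧ ⁅B.e i, B.e j⁆ ≠ 0) :
    4 ≤ sInf {k | 4 ≤ k ∧ ⁅B.e k, B.e n⁆ ≠ 0} ∧
    sInf {k | 4 ≤ k ∧ ⁅B.e k, B.e n⁆ ≠ 0} ≤ sInf {k | 4 ≤ k ∧ ⁅B.e k, B.e (k + 1)⁆ ≠ 0} ∧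
    sInf {k | 4 ≤ k ∧ ⁅B.e k, B.e (k + 1)⁆ ≠ 0} < n ∧
    n ≤ 2 * sInf {k | 4 ≤ k ∧ ⁅B.e k, B.e (k + 1)⁆ ≠ 0} - 2 := by
  classical
  obtain ⟨i0, j0, hi02, hij, hj0n, hne⟩ := hnonmodel
  have hi04 : 4 ≤ i0 := by
    by_contra hlt
    push_neg at hlt
    interval_cases i0
    · exact hne (B.adapted2 j0 (by omega) hj0n)
    · exact hne (B.adapted3 j0 (by omega) hj0n)
  have hn5 : 5 ≤ n := by omega
  set Z1 := {k | 4 ≤ k ∧ ⁅B.e k, B.e n⁆ ≠ 0} with hZ1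
  set Z2 := {k | 4 ≤ k ∧ ⁅B.e k, B.e (k + 1)⁆ ≠ 0} with hZ2
  have hZ1ne : Z1.Nonempty := by
    by_contra hempty
    rw [Set.not_nonempty_iff_eq_empty] at hempty
    have hK : ∀ i, 2 ≤ i → i ≤ n → i ≤ n → ⁅B.e i, B.e n⁆ = 0 := by
      intro i h2 hin _
      rcases Nat.lt_or_ge i 4 with h4 | h4
      · interval_cases i
        · exact B.adapted2 n (by omega) le_rfl
        · exact B.adapted3 n (by omega) le_rfl
      · by_contra h'
        have hmem : i ∈ Z1 := ⟨h4, h'⟩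
        rw [hempty] at hmem
        exact hmem
    have hz := dj B n hK (n - j0) i0 (by omega) (by omega) (by omega) (by omega)
    rw [show n - (n - j0) = j0 by omega] at hz
    exact hne hz
  have hz2ex : ∃ k, 4 ≤ k ∧ k < n ∧ ⁅B.e k, B.e (k+1)⁆ ≠ 0 := by
    by_contra hno
    push_neg at hno
    have hdiag : ∀ k, 2 ≤ k → k + 1 ≤ n → ⁅B.e k, B.e (k+1)⁆ = 0 := by
      intro k h2 hk1
      rcases Nat.lt_or_ge k 4 with h4 | h4
      · interval_cases k
        · exact B.adapted2 3 (by omega) (by omega)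
        · exact B.adapted3 4 (by omega) (by omega)
      · exact hno k h4 (by omega)
    have hz := diff B hdiag (j0 - i0) i0 (by omega) (by omega)
    rw [show i0 + (j0 - i0) = j0 by omega] at hz
    exact hne hz
  obtain ⟨k1, hk14, hk1n, hk1ne⟩ := hz2ex
  have hk1Z2 : k1 ∈ Z2 := ⟨hk14, hk1ne⟩
  have hZ2ne : Z2.Nonempty := ⟨k1, hk1Z2⟩
  have hk0mem := Nat.sInf_mem hZ2ne
  set k0 := sInf Z2 with hk0def
  obtain ⟨hk04, hk0ne⟩ := hk0mem
  have hk0le : k0 ≤ k1 := Nat.sInf_le hk1Z2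
  have hk0n : k0 < n := lt_of_le_of_lt hk0le hk1n
  have hd : n ≤ 2 * k0 - 2 := by
    by_contra hcon
    have h2k : k0 + (k0 + 1) ≤ n + 2 := by omega
    have hv := van B hfil hn5 k0 (k0+1) h2k
    rw [g_eq B (by omega) (by omega) (by omega) (by omega)] at hv
    exact hk0ne hv
  have hb : sInf Z1 ≤ k0 := by
    by_contra hcon
    push_neg at hcon
    have hK : ∀ i, 2 ≤ i → i ≤ k0 → i ≤ n → ⁅B.e i, B.e n⁆ = 0 := by
      intro i h2 hik hin
      rcases Nat.lt_or_ge i 4 with h4 | h4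
      · interval_cases i
        · exact B.adapted2 n (by omega) le_rfl
        · exact B.adapted3 n (by omega) le_rfl
      · by_contra h'
        have hmem : i ∈ Z1 := ⟨h4, h'⟩
        have := Nat.sInf_le hmem
        omega
    have hz := dj B k0 hK (n - (k0+1)) k0 (by omega) le_rfl (by omega) (by omega)
    rw [show n - (n - (k0+1)) = k0 + 1 by omega] at hz
    exact hk0ne hz
  exact ⟨(Nat.sInf_mem hZ1ne).1, hb, hk0n, hd⟩
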